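/- Let n ≥ 1, D > 0, D̃ > 0, M > 0, ε > 0, and define f(x) := max_{y ∈ ℝⁿ, ‖y‖₂ ≤ D̃} M⟨x, y⟩ for x ∈ ℝⁿ. Then f(x) = M D̃ ‖x‖₂ for every x, and if k ≥ 1 satisfies k + 1 ≤ (1/4)·min{n, M² D̃² D²/ε²}, then for every choice of indices i₀, …, i_k ∈ {1,…,n} and every y ∈ conv{D e_{i₀}, …, D e_{i_k}} one has f(y) − min_{x∈Δ} f(x) ≥ ε, where min_{x∈Δ} f(x) = M D̃ D/√n. -/

import Mathlib

open scoped RealInnerProductSpace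

lemma normsq_eq (n : ℕ) (y : EuclideanSpace ℝ (Fin n)) : ‖y‖ ^ 2 = ∑ i, (y i) ^ 2 := by
  rw [EuclideanSpace.norm_eq, Real.sq_sqrt (by positivity)]
  simp [Real.norm_eq_abs, sq_abs]

lemma sum_sq_le (n : ℕ) (T : Finset (Fin n)) (y : EuclideanSpace ℝ (Fin n))
    (h : ∀ i ∉ T, y i = 0) : (∑ i, y i) ^ 2 ≤ (T.card : ℝ) * ‖y‖ ^ 2 := by
  have h1 : ∑ i, y i = ∑ i ∈ T, y i :=
    (Finset.sum_subset (Finset.subset_univ T) (fun i _ hi => h i hi)).symm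
  have h2 := sq_sum_le_card_mul_sum_sq (s := T) (f := fun i => y i)
  have h3 : ∑ i ∈ T, (y i) ^ 2 ≤ ‖y‖ ^ 2 := by
    rw [normsq_eq]
    exact Finset.sum_le_sum_of_subset_of_nonneg (Finset.subset_univ T)
      (fun i _ _ => sq_nonneg _)
  have hc : (0 : ℝ) ≤ T.card := by positivity
  calc (∑ i, y i) ^ 2 = (∑ i ∈ T, y i) ^ 2 := by rw [h1]
    _ ≤ (T.card : ℝ) * ∑ i ∈ T, (y i) ^ 2 := by exact_mod_cast h2
    _ ≤ (T.card : ℝ) * ‖y‖ ^ 2 := by nlinarith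

set_option maxHeartbeats 800000 in
theorem stmt4 (n : ℕ) (hn : 1 ≤ n) (D Dt M ε : ℝ)
    (hD : 0 < D) (hDt : 0 < Dt) (hM : 0 < M) (hε : 0 < ε)
    (f : EuclideanSpace ℝ (Fin n) → ℝ)
    (hf : ∀ x, IsGreatest
      {v : ℝ | ∃ y : EuclideanSpace ℝ (Fin n), ‖y‖ ≤ Dt ∧ v = M * ⟪x, y⟫} (f x))
    (Δ : Set (EuclideanSpace ℝ (Fin n)))
    (hΔ : Δ = {x | (∑ i, x i) = D ∧ ∀ i, 0 ≤ x i}) :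
    (∀ x, f x = M * Dt * ‖x‖) ∧
    sInf (f '' Δ) = M * Dt * D / Real.sqrt n ∧
    (∀ k : ℕ, 1 ≤ k →
      (k : ℝ) + 1 ≤ (1 / 4) * min (n : ℝ) (M ^ 2 * Dt ^ 2 * D ^ 2 / ε ^ 2) →
      ∀ idx : Fin (k + 1) → Fin n,
      ∀ y ∈ convexHull ℝ
        {v : EuclideanSpace ℝ (Fin n) | ∃ j, v = D • EuclideanSpace.single (idx j) (1 : ℝ)},
        f y - sInf (f '' Δ) ≥ ε) := by
  have hn0 : (0:ℝ) < n := by exact_mod_cast hn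
  have hsn0 : (0:ℝ) < Real.sqrt n := Real.sqrt_pos.2 hn0
  -- Part 1
  have hfval : ∀ x, f x = M * Dt * ‖x‖ := by
    intro x
    refine (hf x).unique ⟨?_, ?_⟩
    · by_cases hx : x = 0
      · exact ⟨0, by simpa using hDt.le, by simp [hx]⟩
      · have hxn : (0:ℝ) < ‖x‖ := norm_pos_iff.2 hx
        refine ⟨(Dt / ‖x‖) • x, ?_, ?_⟩
        · rw [norm_smul, Real.norm_eq_abs, abs_of_pos (div_pos hDt hxn)]
          rw [div_mul_cancel₀ _ (ne_of_gt hxn)]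
        · rw [real_inner_smul_right, real_inner_self_eq_norm_sq]
          field_simp
    · rintro v ⟨y, hy, rfl⟩
      have h1 := real_inner_le_norm x y
      have h2 : ‖x‖ * ‖y‖ ≤ ‖x‖ * Dt := mul_le_mul_of_nonneg_left hy (norm_nonneg x)
      nlinarith
  -- Part 2
  have hInf : sInf (f '' Δ) = M * Dt * D / Real.sqrt n := by
    refine IsLeast.csInf_eq ⟨?_, ?_⟩
    · -- the minimizer: constant vector D/n
      set x0 : EuclideanSpace ℝ (Fin n) := WithLp.toLp 2 (fun _ => D / n) with hx0
      have happ : ∀ i, x0 i = D / n := fun i => rfl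
      have h2 : ‖x0‖ ^ 2 = D ^ 2 / n := by
        rw [normsq_eq]
        rw [show (∑ i, (x0 i) ^ 2) = ∑ _i : Fin n, (D / n) ^ 2 from
          Finset.sum_congr rfl (fun i _ => by rw [happ i])]
        rw [Finset.sum_const, Finset.card_univ, Fintype.card_fin, nsmul_eq_mul]
        field_simp
      have hnorm : ‖x0‖ = D / Real.sqrt n := by
        have h3 : D / Real.sqrt n = Real.sqrt (D ^ 2 / n) := by
          rw [Real.sqrt_div (sq_nonneg D), Real.sqrt_sq hD.le]
        rw [h3, ← h2, Real.sqrt_sq (norm_nonneg x0)]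
      refine ⟨x0, ?_, ?_⟩
      · rw [hΔ]
        constructor
        · rw [show (∑ i, x0 i) = ∑ _i : Fin n, (D / n) from
            Finset.sum_congr rfl (fun i _ => happ i)]
          rw [Finset.sum_const, Finset.card_univ, Fintype.card_fin, nsmul_eq_mul]
          field_simp
        · intro i
          rw [happ i]
          positivity
      · rw [hfval, hnorm]; ring
    · rintro v ⟨x, hx, rfl⟩
      rw [hΔ] at hx
      obtain ⟨hsum, -⟩ := hx
      have hcs : D ^ 2 ≤ (n : ℝ) * ‖x‖ ^ 2 := by
        have := sum_sq_le n Finset.univ x (by simp)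
        simpa [hsum, Finset.card_univ] using this
      have hxge : D / Real.sqrt n ≤ ‖x‖ := by
        rw [div_le_iff₀ hsn0]
        have : D = Real.sqrt (D ^ 2) := (Real.sqrt_sq hD.le).symm
        rw [this]
        calc Real.sqrt (D ^ 2) ≤ Real.sqrt ((n : ℝ) * ‖x‖ ^ 2) := Real.sqrt_le_sqrt hcs
          _ = Real.sqrt n * ‖x‖ := by
              rw [Real.sqrt_mul hn0.le, Real.sqrt_sq (norm_nonneg x)]
          _ = ‖x‖ * Real.sqrt n := by ring
      rw [hfval]
      rw [div_le_iff₀ hsn0]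
      calc M * Dt * D ≤ M * Dt * (‖x‖ * Real.sqrt n) := by
            rw [div_le_iff₀ hsn0] at hxge
            exact mul_le_mul_of_nonneg_left hxge (by positivity)
        _ = M * Dt * ‖x‖ * Real.sqrt n := by ring
  refine ⟨hfval, hInf, ?_⟩
  -- Part 3
  intro k hk hkb idx y hy
  set T : Finset (Fin n) := Finset.image idx Finset.univ with hT
  -- the hull is contained in the set C
  have hC : y ∈ {x : EuclideanSpace ℝ (Fin n) | (∑ i, x i) = D ∧ ∀ i ∉ T, x i = 0} := by
    refine convexHull_min ?_ ?_ hy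
    · rintro v ⟨j, rfl⟩
      constructor
      · simp [EuclideanSpace.single_apply, mul_ite, Finset.sum_ite_eq']
      · intro i hi
        have hne : i ≠ idx j := by
          rintro rfl
          exact hi (Finset.mem_image_of_mem idx (Finset.mem_univ j))
        simp [EuclideanSpace.single_apply, hne]
    · intro x hx z hz a b ha hb hab
      obtain ⟨hx1, hx2⟩ := hx
      obtain ⟨hz1, hz2⟩ := hz
      constructor
      · have : ∀ i, (a • x + b • z) i = a * x i + b * z i := by
          intro i; simp
        rw [Finset.sum_congr rfl (fun i _ => this i)]
        rw [Finset.sum_add_distrib, ← Finset.mul_sum, ← Finset.mul_sum, hx1, hz1]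
        nlinarith
      · intro i hi
        have : (a • x + b • z) i = a * x i + b * z i := by simp
        rw [this, hx2 i hi, hz2 i hi]; ring
  obtain ⟨hysum, hysupp⟩ := hC
  have hcard : (T.card : ℝ) ≤ (k : ℝ) + 1 := by
    have h1 : T.card ≤ k + 1 := by
      calc T.card ≤ (Finset.univ : Finset (Fin (k+1))).card := Finset.card_image_le
        _ = k + 1 := by simp
    exact_mod_cast h1
  have hcs : D ^ 2 ≤ ((k : ℝ) + 1) * ‖y‖ ^ 2 := by
    have h1 := sum_sq_le n T y hysupp
    rw [hysum] at h1
    nlinarith [sq_nonneg ‖y‖]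
  set s := Real.sqrt ((k : ℝ) + 1) with hs
  have hs0 : (0:ℝ) < s := Real.sqrt_pos.2 (by positivity)
  have hss : s * s = (k : ℝ) + 1 := Real.mul_self_sqrt (by positivity)
  -- ‖y‖ ≥ D / s
  have hyge : D / s ≤ ‖y‖ := by
    rw [div_le_iff₀ hs0]
    have : D = Real.sqrt (D ^ 2) := (Real.sqrt_sq hD.le).symm
    rw [this]
    calc Real.sqrt (D ^ 2) ≤ Real.sqrt (((k : ℝ) + 1) * ‖y‖ ^ 2) := Real.sqrt_le_sqrt hcs
      _ = s * ‖y‖ := by rw [Real.sqrt_mul (by positivity), Real.sqrt_sq (norm_nonneg y)]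
      _ = ‖y‖ * s := by ring
  -- consequences of the bound on k
  have hb1 : 4 * ((k : ℝ) + 1) ≤ n := by
    have := min_le_left (n : ℝ) (M ^ 2 * Dt ^ 2 * D ^ 2 / ε ^ 2)
    nlinarith
  have hb2 : 4 * ((k : ℝ) + 1) ≤ M ^ 2 * Dt ^ 2 * D ^ 2 / ε ^ 2 := by
    have := min_le_right (n : ℝ) (M ^ 2 * Dt ^ 2 * D ^ 2 / ε ^ 2)
    nlinarith
  have hsn : 2 * s ≤ Real.sqrt n := by
    have h4 : Real.sqrt (4 * ((k : ℝ) + 1)) = 2 * s := by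
      rw [Real.sqrt_mul (by norm_num), show (4:ℝ) = 2 ^ 2 by norm_num,
        Real.sqrt_sq (by norm_num)]
    rw [← h4]
    exact Real.sqrt_le_sqrt hb1
  have hsε : s ≤ M * Dt * D / (2 * ε) := by
    have heq : (M * Dt * D / (2 * ε)) ^ 2 = M ^ 2 * Dt ^ 2 * D ^ 2 / ε ^ 2 / 4 := by
      field_simp; ring
    have h1 : (k : ℝ) + 1 ≤ (M * Dt * D / (2 * ε)) ^ 2 := by rw [heq]; linarith
    calc s ≤ Real.sqrt ((M * Dt * D / (2 * ε)) ^ 2) := Real.sqrt_le_sqrt h1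
      _ = M * Dt * D / (2 * ε) := Real.sqrt_sq (by positivity)
  -- final arithmetic
  rw [hfval, hInf]
  have e1 : M * Dt * D / Real.sqrt n ≤ M * Dt * D / (2 * s) := by
    apply div_le_div_of_nonneg_left (by positivity) (by positivity) hsn
  have e2 : M * Dt * D / s ≤ M * Dt * ‖y‖ := by
    rw [show M * Dt * D / s = M * Dt * (D / s) by ring]
    exact mul_le_mul_of_nonneg_left hyge (by positivity)
  have e3 : ε ≤ M * Dt * D / (2 * s) := by
    rw [le_div_iff₀ (by positivity)]
    rw [le_div_iff₀ (by positivity : (0:ℝ) < 2 * ε)] at hsε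
    nlinarith
  have e4 : M * Dt * D / s = M * Dt * D / (2 * s) + M * Dt * D / (2 * s) := by
    field_simp; ring
  linarith
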